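/- Let Q be a quadratic form in n variables over a field k with rank(Q) at least 5, and suppose a cubic form C satisfies C = L·R + L̃·Q identically, where L, L̃ are linear forms and R is a quadratic form over the algebraic closure, with the hyperplane L = 0 defined over a cubic extension of k but over no smaller field, and with conjugates L = L_1, L_2, L_3 satisfying C = L_i R_i + L̃_i Q for each i. If L and L_2 are not proportional, then R vanishes on the variety L_2 = Q = 0, so R = L_2·L_2' + c_2·Q for some linear form L_2' and constant c_2 over the algebraic closure. -/

import Mathlib

open MvPolynomial

section AuxLemmas

open Finset Matrix

variable {K : Type*} [Field K] {n : ℕ}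




lemma aux_degree_one (m : Fin n →₀ ℕ) (h : m.degree = 1) :
    ∃ j, m = Finsupp.single j 1 := by
  have hm0 : m ≠ 0 := by
    intro h0; rw [h0, map_zero] at h; exact one_ne_zero h.symm
  obtain ⟨j, hj⟩ := Finsupp.ne_iff.mp hm0
  simp only [Finsupp.coe_zero, Pi.zero_apply] at hj
  refine ⟨j, ?_⟩
  have hle := Finsupp.le_degree j m
  rw [h] at hle
  have hmj : m j = 1 := le_antisymm hle (Nat.one_le_iff_ne_zero.mpr hj)
  ext k
  rcases eq_or_ne k j with rfl | hk
  · simp [hmj]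
  · simp only [Finsupp.single_apply, if_neg (Ne.symm hk)]
    by_contra hne
    have hk1 : 1 ≤ m k := Nat.one_le_iff_ne_zero.mpr hne
    have : 2 ≤ m.degree := by
      have hjs : j ∈ m.support := Finsupp.mem_support_iff.mpr hj
      have hks : k ∈ m.support := Finsupp.mem_support_iff.mpr hne
      have : m j + m k ≤ ∑ i ∈ m.support, m i := by
        rw [← Finset.sum_pair hk.symm]
        exact Finset.sum_le_sum_of_subset (by
          intro x hx
          simp only [Finset.mem_insert, Finset.mem_singleton] at hx
          rcases hx with rfl | rfl <;> assumption)
      calc 2 = m j + 1 := by rw [hmj]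
      _ ≤ m j + m k := by omega
      _ ≤ _ := this
    rw [h] at this; omega

/-- A homogeneous polynomial of degree 1 is a linear combination of the variables. -/
lemma linRep {p : MvPolynomial (Fin n) K} (hp : p.IsHomogeneous 1) :
    p = ∑ j, C (coeff (Finsupp.single j 1) p) * X j := by
  ext m
  rw [coeff_sum]
  simp only [coeff_C_mul, coeff_X', mul_ite, mul_one, mul_zero]
  by_cases hm : ∃ j, m = Finsupp.single j 1
  · obtain ⟨j, rfl⟩ := hm
    rw [Finset.sum_eq_single j]
    · simp
    · intro b _ hb
      rw [if_neg]
      intro hc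
      exact hb (by
        have := Finsupp.single_left_injective (α := Fin n) (one_ne_zero (α := ℕ))
        exact this hc.symm |>.symm ▸ rfl)
    · simp
  · rw [Finset.sum_eq_zero (fun j _ => by
      rw [if_neg]; intro hc; exact hm ⟨j, hc.symm⟩)]
    by_cases hdeg : m.degree = 1
    · exact absurd (aux_degree_one m hdeg) hm
    · exact hp.coeff_eq_zero hdeg

lemma evalLin {p : MvPolynomial (Fin n) K} (hp : p.IsHomogeneous 1) (x : Fin n → K) :
    eval x p = ∑ j, coeff (Finsupp.single j 1) p * x j := by
  conv_lhs => rw [linRep hp]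
  simp

/-- A homogeneous polynomial of degree 0 is a constant. -/
lemma constRep {p : MvPolynomial (Fin n) K} (hp : p.IsHomogeneous 0) :
    p = C (coeff 0 p) := by
  ext m
  rcases eq_or_ne m 0 with rfl | hm
  · simp
  · rw [coeff_C, if_neg (Ne.symm hm)]
    exact hp.coeff_eq_zero (by
      rw [Ne, Finsupp.degree_eq_zero_iff]; exact hm)


lemma deg_add (u v : Fin n →₀ ℕ) : (u + v).degree = u.degree + v.degree := by
  simp only [Finsupp.degree_eq_weight_one, map_add]

lemma totalDegree_eq_sup (p : MvPolynomial (Fin n) K) :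
    p.totalDegree = p.support.sup Finsupp.degree := by
  rw [totalDegree]
  congr 1

lemma deg_le_totalDegree {p : MvPolynomial (Fin n) K} {m : Fin n →₀ ℕ}
    (hm : m ∈ p.support) : m.degree ≤ p.totalDegree := by
  rw [totalDegree_eq_sup]
  exact Finset.le_sup hm

lemma coeff_zero_of_deg_gt {p : MvPolynomial (Fin n) K} {m : Fin n →₀ ℕ}
    (h : p.totalDegree < m.degree) : coeff m p = 0 := by
  by_contra hc
  exact absurd (deg_le_totalDegree (mem_support_iff.mpr hc)) (by omega)

lemma top_hc_ne_zero {p : MvPolynomial (Fin n) K} (hp : p ≠ 0) :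
    homogeneousComponent p.totalDegree p ≠ 0 := by
  obtain ⟨m, hm⟩ := (support_nonempty.mpr hp)
  obtain ⟨m', hm', hmax⟩ := Finset.exists_mem_eq_sup p.support ⟨m, hm⟩ Finsupp.degree
  have hdeg : m'.degree = p.totalDegree := by rw [totalDegree_eq_sup, hmax]
  intro h0
  have h1 := coeff_homogeneousComponent (n := p.totalDegree) (φ := p) m'
  rw [h0, coeff_zero, if_pos hdeg] at h1
  exact (mem_support_iff.mp hm') h1.symm

lemma hc_top_mul (f g : MvPolynomial (Fin n) K) :
    homogeneousComponent (f.totalDegree + g.totalDegree) (f * g) =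
      homogeneousComponent f.totalDegree f * homogeneousComponent g.totalDegree g := by
  classical
  ext m
  rw [coeff_homogeneousComponent, coeff_mul, coeff_mul]
  by_cases hm : m.degree = f.totalDegree + g.totalDegree
  · rw [if_pos hm]
    refine Finset.sum_congr rfl ?_
    rintro ⟨u, v⟩ huv
    rw [Finset.HasAntidiagonal.mem_antidiagonal] at huv
    have hdeg : u.degree + v.degree = f.totalDegree + g.totalDegree := by
      rw [← hm, ← huv]; exact (deg_add u v).symm
    simp only [coeff_homogeneousComponent]
    by_cases hu : u.degree = f.totalDegree
    · rw [if_pos hu, if_pos (by omega)]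
    · rcases lt_or_gt_of_ne hu with hlt | hgt
      · have hv : g.totalDegree < v.degree := by omega
        rw [coeff_zero_of_deg_gt (p := g) hv]
        simp
      · rw [coeff_zero_of_deg_gt (p := f) hgt]
        simp
  · rw [if_neg hm]
    symm
    refine Finset.sum_eq_zero ?_
    rintro ⟨u, v⟩ huv
    rw [Finset.HasAntidiagonal.mem_antidiagonal] at huv
    simp only [coeff_homogeneousComponent]
    by_cases hu : u.degree = f.totalDegree
    · by_cases hv : v.degree = g.totalDegree
      · exact absurd (by rw [← huv, deg_add, hu, hv]) hm
      · rw [if_neg hv]; simp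
    · rw [if_neg hu]; simp

lemma totalDegree_mul_eq' {f g : MvPolynomial (Fin n) K} (hf : f ≠ 0) (hg : g ≠ 0) :
    (f * g).totalDegree = f.totalDegree + g.totalDegree := by
  refine le_antisymm (totalDegree_mul f g) ?_
  by_contra hlt
  push_neg at hlt
  have h0 : homogeneousComponent (f.totalDegree + g.totalDegree) (f * g) = 0 :=
    homogeneousComponent_eq_zero _ _ hlt
  rw [hc_top_mul] at h0
  exact mul_ne_zero (top_hc_ne_zero hf) (top_hc_ne_zero hg) h0


lemma my_rank_add_le (A B : Matrix (Fin n) (Fin n) K) :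
    (A + B).rank ≤ A.rank + B.rank := by
  have hr : LinearMap.range (A + B).mulVecLin ≤
      LinearMap.range A.mulVecLin ⊔ LinearMap.range B.mulVecLin := by
    rintro x ⟨y, rfl⟩
    have : (A + B).mulVecLin y = A.mulVecLin y + B.mulVecLin y := by
      simp [Matrix.mulVecLin_apply, Matrix.add_mulVec]
    rw [this]
    exact Submodule.add_mem_sup ⟨y, rfl⟩ ⟨y, rfl⟩
  calc (A + B).rank ≤ Module.finrank K
        ↥(LinearMap.range A.mulVecLin ⊔ LinearMap.range B.mulVecLin) :=
        Submodule.finrank_mono hr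
    _ ≤ _ := Submodule.finrank_add_le_finrank_add_finrank _ _

lemma my_rank_vecMulVec_le (w v : Fin n → K) : (vecMulVec w v).rank ≤ 1 := by
  have hr : LinearMap.range (vecMulVec w v).mulVecLin ≤ Submodule.span K {w} := by
    rintro x ⟨y, rfl⟩
    have : (vecMulVec w v).mulVec y = (v ⬝ᵥ y) • w := by
      ext i
      simp only [vecMulVec_apply, mulVec, dotProduct, Pi.smul_apply, smul_eq_mul,
        Finset.sum_mul, Finset.mul_sum]
      exact Finset.sum_congr rfl fun j _ => by ring
    rw [mulVecLin_apply, this]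
    exact Submodule.smul_mem _ _ (Submodule.mem_span_singleton_self w)
  calc (vecMulVec w v).rank ≤ Module.finrank K ↥(Submodule.span K {w}) :=
        Submodule.finrank_mono hr
    _ ≤ 1 := by
      rcases eq_or_ne w 0 with rfl | hw
      · rw [Submodule.span_zero_singleton]
        simp
      · rw [finrank_span_singleton hw]
def delta (n : ℕ) (K : Type*) [Field K] (i : Fin n) : Fin n → K := fun k => if k = i then 1 else 0

lemma quad_single (S : Matrix (Fin n) (Fin n) K) (i j : Fin n) :
    (∑ i', ∑ j', S i' j' * delta n K i i' * delta n K j j') = S i j := by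
  simp [delta, mul_ite, ite_mul, Finset.sum_ite_eq']

lemma quad_expand (S : Matrix (Fin n) (Fin n) K) (u v : Fin n → K) :
    (∑ i, ∑ j, S i j * (u + v) i * (u + v) j) =
      ((∑ i, ∑ j, S i j * u i * u j) + (∑ i, ∑ j, S i j * u i * v j)) +
      ((∑ i, ∑ j, S i j * v i * u j) + (∑ i, ∑ j, S i j * v i * v j)) := by
  simp only [← Finset.sum_add_distrib]
  refine Finset.sum_congr rfl fun i _ => ?_
  refine Finset.sum_congr rfl fun j _ => ?_
  simp only [Pi.add_apply]
  ring

lemma sym_zero (S : Matrix (Fin n) (Fin n) K) (hS : S.IsSymm) (hchar : (2:K) ≠ 0)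
    (h : ∀ x : Fin n → K, ∑ i, ∑ j, S i j * x i * x j = 0) : S = 0 := by
  ext i j
  have hii : S i i = 0 := by
    have := h (delta n K i)
    rwa [quad_single] at this
  have hjj : S j j = 0 := by
    have := h (delta n K j)
    rwa [quad_single] at this
  have hij := h (delta n K i + delta n K j)
  rw [quad_expand, quad_single, quad_single, quad_single, quad_single] at hij
  have hsymm : S j i = S i j := hS.apply i j
  have h2 : (2:K) * S i j = 0 := by
    rw [hii, hjj, hsymm] at hij
    linear_combination hij
  simpa using (mul_eq_zero.mp h2).resolve_left hchar

lemma rank_le_four (MQ : Matrix (Fin n) (Fin n) K) (hMQ : MQ.IsSymm) (hchar : (2:K) ≠ 0)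
    (p1 p2 p3 p4 : MvPolynomial (Fin n) K)
    (h1 : p1.IsHomogeneous 1) (h2 : p2.IsHomogeneous 1)
    (h3 : p3.IsHomogeneous 1) (h4 : p4.IsHomogeneous 1)
    (hQ : (∑ i, ∑ j, C (MQ i j) * X i * X j) = p1 * p2 + p3 * p4) :
    MQ.rank ≤ 4 := by
  classical
  set c : K := (2:K)⁻¹ with hc
  set v1 : Fin n → K := fun j => coeff (Finsupp.single j 1) p1 with hv1
  set v2 : Fin n → K := fun j => coeff (Finsupp.single j 1) p2 with hv2
  set v3 : Fin n → K := fun j => coeff (Finsupp.single j 1) p3 with hv3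
  set v4 : Fin n → K := fun j => coeff (Finsupp.single j 1) p4 with hv4
  set N : Matrix (Fin n) (Fin n) K :=
    vecMulVec (c • v1) v2 + vecMulVec (c • v2) v1 +
    vecMulVec (c • v3) v4 + vecMulVec (c • v4) v3 with hN
  have hkey : ∀ x : Fin n → K,
      (∑ i, ∑ j, MQ i j * x i * x j) =
        (∑ j, v1 j * x j) * (∑ j, v2 j * x j) + (∑ j, v3 j * x j) * (∑ j, v4 j * x j) := by
    intro x
    have := congrArg (eval x) hQ
    simp only [map_sum, map_add, eval_mul, eval_C, eval_X] at this
    rw [this, evalLin h1 x, evalLin h2 x, evalLin h3 x, evalLin h4 x]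
  have hNsym : ∀ i j, N j i = N i j := fun i j => by
    simp only [hN, Matrix.add_apply, vecMulVec_apply, Pi.smul_apply, smul_eq_mul]
    ring
  have hNquad : ∀ x : Fin n → K,
      (∑ i, ∑ j, N i j * x i * x j) =
        (∑ j, v1 j * x j) * (∑ j, v2 j * x j) + (∑ j, v3 j * x j) * (∑ j, v4 j * x j) := by
    intro x
    have expand : ∀ (w v : Fin n → K),
        (∑ i, ∑ j, (c * w i) * v j * x i * x j) =
          c * ((∑ j, w j * x j) * (∑ j, v j * x j)) := by
      intro w v
      rw [Finset.sum_mul_sum, Finset.mul_sum]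
      refine Finset.sum_congr rfl fun i _ => ?_
      rw [Finset.mul_sum]
      refine Finset.sum_congr rfl fun j _ => ?_
      ring
    have hexp : (∑ i, ∑ j, N i j * x i * x j) =
        (∑ i, ∑ j, (c * v1 i) * v2 j * x i * x j) +
        (∑ i, ∑ j, (c * v2 i) * v1 j * x i * x j) +
        (∑ i, ∑ j, (c * v3 i) * v4 j * x i * x j) +
        (∑ i, ∑ j, (c * v4 i) * v3 j * x i * x j) := by
      simp only [← Finset.sum_add_distrib]
      refine Finset.sum_congr rfl fun i _ => ?_
      refine Finset.sum_congr rfl fun j _ => ?_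
      simp only [hN, Matrix.add_apply, vecMulVec_apply, Pi.smul_apply, smul_eq_mul]
      ring
    rw [hexp, expand, expand, expand, expand, hc]
    field_simp
    ring
  have hMN : MQ = N := by
    have hS : MQ - N = 0 := by
      apply sym_zero _ ?_ hchar
      · intro x
        have hsub : (∑ i, ∑ j, (MQ - N) i j * x i * x j) =
            (∑ i, ∑ j, MQ i j * x i * x j) - (∑ i, ∑ j, N i j * x i * x j) := by
          simp only [← Finset.sum_sub_distrib]
          refine Finset.sum_congr rfl fun i _ => ?_
          refine Finset.sum_congr rfl fun j _ => ?_
          simp only [Matrix.sub_apply]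
          ring
        rw [hsub, hkey, hNquad, sub_self]
      · rw [Matrix.IsSymm]
        ext i j
        rw [Matrix.transpose_apply, Matrix.sub_apply, Matrix.sub_apply,
          hMQ.apply i j, hNsym i j]
    exact eq_of_sub_eq_zero hS
  rw [hMN, hN]
  calc (vecMulVec (c • v1) v2 + vecMulVec (c • v2) v1 +
      vecMulVec (c • v3) v4 + vecMulVec (c • v4) v3).rank
      ≤ (vecMulVec (c • v1) v2 + vecMulVec (c • v2) v1 + vecMulVec (c • v3) v4).rank +
        (vecMulVec (c • v4) v3).rank := my_rank_add_le _ _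
    _ ≤ ((vecMulVec (c • v1) v2 + vecMulVec (c • v2) v1).rank +
        (vecMulVec (c • v3) v4).rank) + (vecMulVec (c • v4) v3).rank := by
        gcongr
        exact my_rank_add_le _ _
    _ ≤ (((vecMulVec (c • v1) v2).rank + (vecMulVec (c • v2) v1).rank) +
        (vecMulVec (c • v3) v4).rank) + (vecMulVec (c • v4) v3).rank := by
        gcongr
        exact my_rank_add_le _ _
    _ ≤ ((1 + 1) + 1) + 1 := by
        gcongr <;> exact my_rank_vecMulVec_le _ _
    _ = 4 := by norm_num
noncomputable def subP (a : Fin n → K) (i0 : Fin n) : Fin n → MvPolynomial (Fin n) K :=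
  fun j => if j = i0 then C (-(a i0)⁻¹) * ∑ k ∈ Finset.univ.erase i0, C (a k) * X k else X j

noncomputable def ell (a : Fin n → K) : MvPolynomial (Fin n) K := ∑ j, C (a j) * X j

noncomputable def wfun (a : Fin n → K) (i0 : Fin n) : Fin n → MvPolynomial (Fin n) K :=
  fun j => if j = i0 then
    C ((a i0)⁻¹) * (X i0 - ∑ k ∈ Finset.univ.erase i0, C (a k) * X k) else X j

noncomputable def wfun' (a : Fin n → K) (i0 : Fin n) : Fin n → MvPolynomial (Fin n) K :=
  fun j => if j = i0 then ell a else X j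

lemma subP_isHom (a : Fin n → K) (i0 : Fin n) (j : Fin n) :
    (subP a i0 j).IsHomogeneous 1 := by
  rw [subP]
  split_ifs with h
  · exact (MvPolynomial.IsHomogeneous.sum _ _ 1
      (fun k _ => isHomogeneous_C_mul_X _ _)).C_mul _
  · exact isHomogeneous_X _ _

lemma ell_split (a : Fin n → K) (i0 : Fin n) :
    ell a = C (a i0) * X i0 + ∑ k ∈ Finset.univ.erase i0, C (a k) * X k := by
  rw [ell, ← Finset.add_sum_erase _ _ (Finset.mem_univ i0)]

lemma aeval_subP_ell (a : Fin n → K) (i0 : Fin n) (ha : a i0 ≠ 0) :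
    aeval (subP a i0) (ell a) = 0 := by
  rw [ell_split a i0]
  rw [map_add, _root_.map_mul, map_sum, aeval_C, aeval_X, algebraMap_eq]
  have h1 : subP a i0 i0 = C (-(a i0)⁻¹) * ∑ k ∈ Finset.univ.erase i0, C (a k) * X k := by
    rw [subP, if_pos rfl]
  have h2 : ∀ k ∈ Finset.univ.erase i0, aeval (subP a i0) (C (a k) * X k) = C (a k) * X k := by
    intro k hk
    rw [_root_.map_mul, aeval_C, aeval_X, subP, if_neg (Finset.ne_of_mem_erase hk),
      algebraMap_eq]
  rw [Finset.sum_congr rfl h2, h1, ← mul_assoc, ← C_mul, mul_neg, mul_inv_cancel₀ ha]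
  rw [_root_.map_neg, _root_.map_one, neg_one_mul, neg_add_cancel]

lemma aeval_update_fix (i0 : Fin n) (p : MvPolynomial (Fin n) K)
    (hp : ∀ m ∈ p.support, m i0 = 0) :
    aeval (Function.update X i0 (0 : MvPolynomial (Fin n) K)) p = p := by
  conv_lhs => rw [p.as_sum]
  rw [map_sum]
  conv_rhs => rw [p.as_sum]
  refine Finset.sum_congr rfl fun m hm => ?_
  rw [aeval_monomial, monomial_eq, algebraMap_eq]
  congr 1
  refine Finsupp.prod_congr fun k hk => ?_
  have hki : k ≠ i0 := by
    intro h
    exact (Finsupp.mem_support_iff.mp hk) (h ▸ hp m hm)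
  rw [Function.update_of_ne hki]

lemma X_dvd_of_aeval_update (i0 : Fin n) (q : MvPolynomial (Fin n) K)
    (h : aeval (Function.update X i0 (0 : MvPolynomial (Fin n) K)) q = 0) :
    X i0 ∣ q := by
  rw [X_dvd_iff_modMonomial_eq_zero]
  have hdm := divMonomial_add_modMonomial_single q i0
  set r := modMonomial q (Finsupp.single i0 1) with hr
  have hrfix : aeval (Function.update X i0 (0 : MvPolynomial (Fin n) K)) r = r := by
    refine aeval_update_fix i0 r fun m hm => ?_
    by_contra hne
    have hle : Finsupp.single i0 1 ≤ m := by
      rw [Finsupp.single_le_iff]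
      omega
    exact (Finsupp.mem_support_iff.mp hm) (coeff_modMonomial_of_le q hle)
  have := congrArg (aeval (Function.update X i0 (0 : MvPolynomial (Fin n) K))) hdm
  rw [map_add, _root_.map_mul, aeval_X, Function.update_self, zero_mul, zero_add, hrfix, h] at this
  exact this

lemma wfun_comp1 (a : Fin n → K) (i0 : Fin n) (ha : a i0 ≠ 0) (p : MvPolynomial (Fin n) K) :
    aeval (wfun' a i0) (aeval (wfun a i0) p) = p := by
  have : ((aeval (wfun' a i0)).comp (aeval (wfun a i0)) :
      MvPolynomial (Fin n) K →ₐ[K] MvPolynomial (Fin n) K) = AlgHom.id K _ := by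
    apply MvPolynomial.algHom_ext
    intro j
    simp only [AlgHom.comp_apply, aeval_X, AlgHom.id_apply]
    rw [wfun]
    split_ifs with h
    · subst h
      rw [_root_.map_mul, aeval_C, _root_.map_sub, aeval_X, map_sum]
      have h2 : ∀ k ∈ Finset.univ.erase j, aeval (wfun' a j) (C (a k) * X k) = C (a k) * X k := by
        intro k hk
        rw [_root_.map_mul, aeval_C, aeval_X, wfun', if_neg (Finset.ne_of_mem_erase hk),
          algebraMap_eq]
      rw [Finset.sum_congr rfl h2]
      have : wfun' a j j = ell a := by rw [wfun', if_pos rfl]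
      rw [this, ell_split a j, algebraMap_eq]
      rw [add_sub_cancel_right, ← mul_assoc, ← C_mul, inv_mul_cancel₀ ha, C_1, one_mul]
    · rw [aeval_X, wfun', if_neg h]
  exact DFunLike.congr_fun this p

lemma wfun_comp2 (a : Fin n → K) (i0 : Fin n) (ha : a i0 ≠ 0) (p : MvPolynomial (Fin n) K) :
    aeval (wfun a i0) (aeval (wfun' a i0) p) = p := by
  have : ((aeval (wfun a i0)).comp (aeval (wfun' a i0)) :
      MvPolynomial (Fin n) K →ₐ[K] MvPolynomial (Fin n) K) = AlgHom.id K _ := by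
    apply MvPolynomial.algHom_ext
    intro j
    simp only [AlgHom.comp_apply, aeval_X, AlgHom.id_apply]
    rw [wfun']
    split_ifs with h
    · subst h
      rw [ell_split a j, map_add, _root_.map_mul, aeval_C, aeval_X, map_sum]
      have h2 : ∀ k ∈ Finset.univ.erase j, aeval (wfun a j) (C (a k) * X k) = C (a k) * X k := by
        intro k hk
        rw [_root_.map_mul, aeval_C, aeval_X, wfun, if_neg (Finset.ne_of_mem_erase hk),
          algebraMap_eq]
      rw [Finset.sum_congr rfl h2]
      have : wfun a j j = C ((a j)⁻¹) * (X j - ∑ k ∈ Finset.univ.erase j, C (a k) * X k) := by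
        rw [wfun, if_pos rfl]
      rw [this, algebraMap_eq, ← mul_assoc, ← C_mul, mul_inv_cancel₀ ha, C_1, one_mul]
      ring
    · rw [aeval_X, wfun, if_neg h]
  exact DFunLike.congr_fun this p

lemma sigma_decomp (a : Fin n → K) (i0 : Fin n) (ha : a i0 ≠ 0) (p : MvPolynomial (Fin n) K) :
    aeval (subP a i0) p =
      aeval (Function.update X i0 (0 : MvPolynomial (Fin n) K)) (aeval (wfun a i0) p) := by
  have : (aeval (subP a i0) : MvPolynomial (Fin n) K →ₐ[K] MvPolynomial (Fin n) K) =
      (aeval (Function.update X i0 (0 : MvPolynomial (Fin n) K))).comp (aeval (wfun a i0)) := by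
    apply MvPolynomial.algHom_ext
    intro j
    simp only [AlgHom.comp_apply, aeval_X]
    rw [subP, wfun]
    split_ifs with h
    · subst h
      rw [_root_.map_mul, aeval_C, _root_.map_sub, aeval_X, Function.update_self, map_sum]
      have h2 : ∀ k ∈ Finset.univ.erase j,
          aeval (Function.update X j (0 : MvPolynomial (Fin n) K)) (C (a k) * X k)
            = C (a k) * X k := by
        intro k hk
        rw [_root_.map_mul, aeval_C, aeval_X, Function.update_of_ne (Finset.ne_of_mem_erase hk),
          algebraMap_eq]
      rw [Finset.sum_congr rfl h2, algebraMap_eq, zero_sub, mul_neg, ← neg_mul, ← _root_.map_neg]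
    · rw [aeval_X, Function.update_of_ne h]
  exact DFunLike.congr_fun this p

lemma ker_sigma (a : Fin n → K) (i0 : Fin n) (ha : a i0 ≠ 0) (p : MvPolynomial (Fin n) K)
    (h : aeval (subP a i0) p = 0) : ∃ q, p = ell a * q := by
  rw [sigma_decomp a i0 ha] at h
  obtain ⟨d, hd⟩ := X_dvd_of_aeval_update i0 _ h
  refine ⟨aeval (wfun' a i0) d, ?_⟩
  have := congrArg (aeval (wfun' a i0)) hd
  rw [wfun_comp1 a i0 ha, _root_.map_mul, aeval_X] at this
  rw [this, wfun']
  rw [if_pos rfl]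

lemma sigma_idem (a : Fin n → K) (i0 : Fin n) (p : MvPolynomial (Fin n) K) :
    aeval (subP a i0) (aeval (subP a i0) p) = aeval (subP a i0) p := by
  have : ((aeval (subP a i0)).comp (aeval (subP a i0)) :
      MvPolynomial (Fin n) K →ₐ[K] MvPolynomial (Fin n) K) = aeval (subP a i0) := by
    apply MvPolynomial.algHom_ext
    intro j
    simp only [AlgHom.comp_apply, aeval_X]
    rcases eq_or_ne j i0 with rfl | h
    · rw [subP, if_pos rfl]
      rw [_root_.map_mul, aeval_C, map_sum]
      congr 1
      refine Finset.sum_congr rfl fun k hk => ?_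
      rw [_root_.map_mul, aeval_C, aeval_X, subP, if_neg (Finset.ne_of_mem_erase hk)]
      rfl
    · conv_lhs => rw [subP, if_neg h]
      rw [aeval_X]
  exact DFunLike.congr_fun this p

lemma hom_quotient {l p q : MvPolynomial (Fin n) K} (hl : l.IsHomogeneous 1)
    {d : ℕ} (hp : p.IsHomogeneous (d + 1)) (hpq : p = l * q) :
    ∃ q', q'.IsHomogeneous d ∧ p = l * q' := by
  have hsum := sum_homogeneousComponent q
  have hps : p = ∑ i ∈ Finset.range (q.totalDegree + 1), l * homogeneousComponent i q := by
    rw [← Finset.mul_sum, hsum, hpq]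
  have hcs : p = ∑ i ∈ Finset.range (q.totalDegree + 1),
      if i = d then l * homogeneousComponent d q else 0 := by
    have hcp : homogeneousComponent (d+1) p = p :=
      by rw [homogeneousComponent_of_mem ((mem_homogeneousSubmodule _ _).mpr hp), if_pos rfl]
    conv_lhs => rw [← hcp, hps]
    rw [map_sum]
    refine Finset.sum_congr rfl fun i _ => ?_
    have hterm : (l * homogeneousComponent i q) ∈ homogeneousSubmodule (Fin n) K (1 + i) :=
      (mem_homogeneousSubmodule _ _).mpr (hl.mul (homogeneousComponent_isHomogeneous i q))
    rw [homogeneousComponent_of_mem hterm]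
    rcases eq_or_ne i d with rfl | hne
    · rw [if_pos (by omega), if_pos rfl]
    · rw [if_neg (by omega), if_neg hne]
  rw [Finset.sum_ite_eq' (Finset.range (q.totalDegree + 1))] at hcs
  by_cases hd : d ∈ Finset.range (q.totalDegree + 1)
  · rw [if_pos hd] at hcs
    exact ⟨homogeneousComponent d q, homogeneousComponent_isHomogeneous d q, hcs⟩
  · rw [if_neg hd] at hcs
    exact ⟨0, isHomogeneous_zero _ _ _, by rw [hcs, mul_zero]⟩
lemma eq_C_of_deg_zero {p : MvPolynomial (Fin n) K} (h : p.totalDegree = 0) :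
    p = C (coeff 0 p) := by
  ext m
  rcases eq_or_ne m 0 with rfl | hm
  · simp
  · rw [coeff_C, if_neg (Ne.symm hm)]
    by_contra hne
    obtain ⟨x, hx⟩ := Finsupp.ne_iff.mp hm
    simp only [Finsupp.coe_zero, Pi.zero_apply] at hx
    exact hx (((totalDegree_eq_zero_iff _ p).mp h) m (mem_support_iff.mpr hne) x)

lemma eval_at_zero (p : MvPolynomial (Fin n) K) :
    eval (fun _ => (0:K)) p = coeff 0 p := by
  rw [eval_zero']
  rfl

end AuxLemmas

/-- Let `Q` be a quadratic form of rank at least `5` (symmetric matrix `MQ`) over an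
algebraically closed field of characteristic zero, and suppose
`L·R + L̃·Q = L₂·R₂ + L̃₂·Q` with `L, L₂, L̃, L̃₂` linear and `R, R₂` quadratic.  If `L` and
`L₂` are not proportional, then `R` vanishes on the variety `L₂ = Q = 0`, and hence
`R = L₂·L₂' + c₂·Q` for some linear form `L₂'` and constant `c₂`. -/
theorem quadratic_in_ideal_of_vanishing (K : Type*) [Field K] [IsAlgClosed K] [CharZero K]
    (n : ℕ) (MQ : Matrix (Fin n) (Fin n) K) (hMQ : MQ.IsSymm) (hrank : 5 ≤ MQ.rank)
    (Q : MvPolynomial (Fin n) K)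
    (hQdef : Q = ∑ i, ∑ j, MvPolynomial.C (MQ i j) * MvPolynomial.X i * MvPolynomial.X j)
    (L L2 Lt Lt2 R R2 : MvPolynomial (Fin n) K)
    (hL : L.IsHomogeneous 1) (hL2 : L2.IsHomogeneous 1)
    (hLt : Lt.IsHomogeneous 1) (hLt2 : Lt2.IsHomogeneous 1)
    (hR : R.IsHomogeneous 2) (hR2 : R2.IsHomogeneous 2)
    (heq : L * R + Lt * Q = L2 * R2 + Lt2 * Q)
    (hprop : ¬ ∃ c : K, L = c • L2 ∨ L2 = c • L) :
    (∀ y : Fin n → K, MvPolynomial.eval y L2 = 0 → MvPolynomial.eval y Q = 0 →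
        MvPolynomial.eval y R = 0) ∧
    ∃ (L2' : MvPolynomial (Fin n) K) (c2 : K), L2'.IsHomogeneous 1 ∧
      R = L2 * L2' + MvPolynomial.C c2 * Q := by
  classical
  have hchar : (2:K) ≠ 0 := two_ne_zero
  have hL2ne : L2 ≠ 0 := fun h => hprop ⟨0, Or.inr (by rw [h, zero_smul])⟩
  set a : Fin n → K := fun j => coeff (Finsupp.single j 1) L2 with ha
  have hL2rep : L2 = ell a := by
    rw [ell]; exact linRep hL2
  have hex : ∃ i0, a i0 ≠ 0 := by
    by_contra h
    push_neg at h
    exact hL2ne (by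
      rw [hL2rep, ell]
      exact Finset.sum_eq_zero fun j _ => by rw [h j, C_0, zero_mul])
  obtain ⟨i0, hai⟩ := hex
  have hσL2 : aeval (subP a i0) L2 = 0 := by rw [hL2rep]; exact aeval_subP_ell a i0 hai
  have hker : ∀ p : MvPolynomial (Fin n) K,
      aeval (subP a i0) p = 0 → ∃ q, p = L2 * q := by
    intro p hp
    obtain ⟨q, hq⟩ := ker_sigma a i0 hai p hp
    exact ⟨q, by rw [hL2rep]; exact hq⟩
  have himg : ∀ (p : MvPolynomial (Fin n) K) (d : ℕ), p.IsHomogeneous d →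
      (aeval (subP a i0) p).IsHomogeneous d := by
    intro p d hp
    have := hp.aeval (subP a i0) (subP_isHom a i0)
    rwa [one_mul] at this
  have heq2 : aeval (subP a i0) L * aeval (subP a i0) R =
      (aeval (subP a i0) Lt2 - aeval (subP a i0) Lt) * aeval (subP a i0) Q := by
    have h := congrArg (aeval (subP a i0)) heq
    simp only [map_add, _root_.map_mul] at h
    rw [hσL2, zero_mul, zero_add] at h
    linear_combination h
  have hQhom : Q.IsHomogeneous 2 := by
    rw [hQdef]
    refine IsHomogeneous.sum _ _ _ fun i _ => IsHomogeneous.sum _ _ _ fun j _ => ?_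
    exact (isHomogeneous_C_mul_X (MQ i j) i).mul (isHomogeneous_X _ j)
  have hQrank_contra : ∀ p1 p2 p3 p4 : MvPolynomial (Fin n) K, p1.IsHomogeneous 1 →
      p2.IsHomogeneous 1 → p3.IsHomogeneous 1 → p4.IsHomogeneous 1 →
      Q = p1 * p2 + p3 * p4 → False := by
    intro p1 p2 p3 p4 h1 h2 h3 h4 hQeq
    have := rank_le_four MQ hMQ hchar p1 p2 p3 p4 h1 h2 h3 h4 (by rw [← hQdef]; exact hQeq)
    omega
  have hQmσ : ∃ B, B.IsHomogeneous 1 ∧ Q = L2 * B + aeval (subP a i0) Q := by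
    have h0 : aeval (subP a i0) (Q - aeval (subP a i0) Q) = 0 := by
      rw [_root_.map_sub, sigma_idem, sub_self]
    obtain ⟨q, hq⟩ := hker _ h0
    have hhom : (Q - aeval (subP a i0) Q).IsHomogeneous 2 := hQhom.sub (himg Q 2 hQhom)
    obtain ⟨B, hB, hQB⟩ := hom_quotient hL2 (d := 1) hhom hq
    exact ⟨B, hB, sub_eq_iff_eq_add.mp hQB⟩
  obtain ⟨B, hBhom, hQB⟩ := hQmσ
  have hσQne : aeval (subP a i0) Q ≠ 0 := by
    intro h0
    rw [h0, add_zero] at hQB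
    exact hQrank_contra L2 B 0 0 hL2 hBhom (isHomogeneous_zero _ _ _)
      (isHomogeneous_zero _ _ _) (by rw [hQB, mul_zero, add_zero])
  have hσQhom : (aeval (subP a i0) Q).IsHomogeneous 2 := himg Q 2 hQhom
  have hσQdeg : (aeval (subP a i0) Q).totalDegree = 2 := hσQhom.totalDegree hσQne
  have hirr : Irreducible (aeval (subP a i0) Q) := by
    constructor
    · intro hu
      have h1 : IsUnit (eval (fun _ => (0:K)) (aeval (subP a i0) Q)) :=
        hu.map (eval (fun _ => (0:K)))
      rw [eval_at_zero, hσQhom.coeff_eq_zero (by simp [map_zero])] at h1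
      exact h1.ne_zero rfl
    · intro f g hfg
      by_contra hcon
      push_neg at hcon
      obtain ⟨hf, hg⟩ := hcon
      have hfne : f ≠ 0 := by rintro rfl; rw [zero_mul] at hfg; exact hσQne hfg
      have hgne : g ≠ 0 := by rintro rfl; rw [mul_zero] at hfg; exact hσQne hfg
      have hsum : f.totalDegree + g.totalDegree = 2 := by
        rw [← totalDegree_mul_eq' hfne hgne, ← hfg, hσQdeg]
      have hfd : f.totalDegree ≠ 0 := by
        intro h0
        apply hf
        rw [eq_C_of_deg_zero h0]
        exact ((isUnit_iff_ne_zero.mpr (fun hc => hfne (by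
          rw [eq_C_of_deg_zero h0, hc, C_0]))).map (C : K →+* MvPolynomial (Fin n) K))
      have hgd : g.totalDegree ≠ 0 := by
        intro h0
        apply hg
        rw [eq_C_of_deg_zero h0]
        exact ((isUnit_iff_ne_zero.mpr (fun hc => hgne (by
          rw [eq_C_of_deg_zero h0, hc, C_0]))).map (C : K →+* MvPolynomial (Fin n) K))
      have hfd1 : f.totalDegree = 1 := by omega
      have hgd1 : g.totalDegree = 1 := by omega
      have hFG : aeval (subP a i0) Q =
          homogeneousComponent 1 f * homogeneousComponent 1 g := by
        have h := hc_top_mul f g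
        rw [hfd1, hgd1, ← hfg] at h
        rwa [homogeneousComponent_of_mem ((mem_homogeneousSubmodule _ _).mpr hσQhom),
          if_pos rfl] at h
      exact hQrank_contra L2 B (homogeneousComponent 1 f) (homogeneousComponent 1 g)
        hL2 hBhom (homogeneousComponent_isHomogeneous 1 f)
        (homogeneousComponent_isHomogeneous 1 g) (by rw [hQB, hFG])
  have hprime : Prime (aeval (subP a i0) Q) :=
    UniqueFactorizationMonoid.irreducible_iff_prime.mp hirr
  have hdvd : aeval (subP a i0) Q ∣ aeval (subP a i0) L * aeval (subP a i0) R :=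
    ⟨aeval (subP a i0) Lt2 - aeval (subP a i0) Lt, by rw [heq2]; ring⟩
  have hσLne : aeval (subP a i0) L ≠ 0 := by
    intro h0
    obtain ⟨t, ht⟩ := hker L h0
    obtain ⟨t', ht', hLt'⟩ := hom_quotient hL2 (d := 0) hL ht
    refine hprop ⟨coeff 0 t', Or.inl ?_⟩
    rw [smul_eq_C_mul, hLt']
    conv_lhs => rw [constRep ht']
    ring
  have hndvd : ¬ aeval (subP a i0) Q ∣ aeval (subP a i0) L := by
    rintro ⟨t, ht⟩
    have htne : t ≠ 0 := by rintro rfl; rw [mul_zero] at ht; exact hσLne ht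
    have hd : (aeval (subP a i0) L).totalDegree = 2 + t.totalDegree := by
      rw [ht, totalDegree_mul_eq' hσQne htne, hσQdeg]
    have hL1 : (aeval (subP a i0) L).totalDegree = 1 := (himg L 1 hL).totalDegree hσLne
    omega
  have hdvdR : aeval (subP a i0) Q ∣ aeval (subP a i0) R :=
    (hprime.dvd_or_dvd hdvd).resolve_left hndvd
  obtain ⟨t, ht⟩ := hdvdR
  have hc2 : ∃ c2 : K, aeval (subP a i0) R = C c2 * aeval (subP a i0) Q := by
    rcases eq_or_ne t 0 with rfl | htne
    · exact ⟨0, by rw [ht, C_0, zero_mul, mul_zero]⟩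
    · have hσRne : aeval (subP a i0) R ≠ 0 := by rw [ht]; exact mul_ne_zero hσQne htne
      have hdR : (aeval (subP a i0) R).totalDegree = 2 := (himg R 2 hR).totalDegree hσRne
      have hdeg2 : (2:ℕ) = 2 + t.totalDegree := by
        conv_lhs => rw [← hdR, ht]
        rw [totalDegree_mul_eq' hσQne htne, hσQdeg]
      have ht0 : t.totalDegree = 0 := by omega
      refine ⟨coeff 0 t, ?_⟩
      conv_lhs => rw [ht, eq_C_of_deg_zero ht0]
      ring
  obtain ⟨c2, hc2⟩ := hc2
  have hkerR : aeval (subP a i0) (R - C c2 * Q) = 0 := by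
    rw [_root_.map_sub, _root_.map_mul, aeval_C, algebraMap_eq, hc2]
    ring
  obtain ⟨q, hq⟩ := hker _ hkerR
  have hhomRQ : (R - C c2 * Q).IsHomogeneous 2 := hR.sub (hQhom.C_mul c2)
  obtain ⟨L2', hL2'hom, hfin⟩ := hom_quotient hL2 (d := 1) hhomRQ hq
  have hRdecomp : R = L2 * L2' + C c2 * Q := by
    linear_combination hfin
  constructor
  · intro y hy2 hyQ
    have h := congrArg (eval y) hRdecomp
    rw [map_add, _root_.map_mul, _root_.map_mul, hy2, zero_mul, hyQ, mul_zero,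
      add_zero] at h
    exact h
  · exact ⟨L2', c2, hL2'hom, hRdecomp⟩
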